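/- For every m ≥ 1, there exists a prime p such that p does not divide λ_0^(m,a) and does not divide λ_1^(m,a), but p divides λ_i^(m,a) for all i with 2 ≤ i ≤ n. -/

import Mathlib

/-- `QDvd d q` means the rational number `q` is `d` times an integer. -/
def QDvd (d : ℕ) (q : ℚ) : Prop := ∃ c : ℤ, q = (d : ℚ) * c


def Eseq (B : ℤ) : ℕ → ℤ
  | 0 => 1
  | 1 => B + 1
  | (m+2) => (B+2) * Eseq B (m+1) - Eseq B m

lemma Eseq_zero (B : ℤ) : Eseq B 0 = 1 := rfl
lemma Eseq_one (B : ℤ) : Eseq B 1 = B + 1 := rfl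
lemma Eseq_ss (B : ℤ) (m : ℕ) : Eseq B (m+2) = (B+2) * Eseq B (m+1) - Eseq B m := rfl

lemma Eseq_inv (B : ℤ) : ∀ m, Eseq B (m+1)^2 + Eseq B m^2 - (B+2) * Eseq B (m+1) * Eseq B m = -B := by
  intro m
  induction m with
  | zero => simp [Eseq_zero, Eseq_one]; ring
  | succ m ih => rw [Eseq_ss]; linear_combination ih

lemma Eseq_id (B : ℤ) (m : ℕ) : Eseq B (m+2) * Eseq B m = Eseq B (m+1)^2 + B := by
  rw [Eseq_ss]; linear_combination -(Eseq_inv B m)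

lemma Eseq_mono (B : ℤ) (hB : 0 ≤ B) : ∀ m, 1 ≤ Eseq B m ∧ Eseq B m ≤ Eseq B (m+1) := by
  intro m
  induction m with
  | zero => constructor <;> simp [Eseq_zero, Eseq_one]; linarith
  | succ m ih =>
    obtain ⟨h1, h2⟩ := ih
    refine ⟨by linarith, ?_⟩
    rw [Eseq_ss]
    nlinarith

lemma Eseq_ge3 (B : ℤ) (hB : 2 ≤ B) (m : ℕ) : 3 ≤ Eseq B (m+1) := by
  induction m with
  | zero => rw [Eseq_one]; linarith
  | succ m ih => have := (Eseq_mono B (by linarith) (m+1)).2; linarith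

lemma Eseq_coprime (B : ℤ) : ∀ m, IsCoprime (Eseq B (m+1)) (B * Eseq B m) := by
  intro m
  induction m with
  | zero => exact ⟨1, -1, by rw [Eseq_one, Eseq_zero]; ring⟩
  | succ m ih =>
    have hE1 : IsCoprime (Eseq B (m+1)) (Eseq B m) := ih.of_mul_right_right
    have hEB : IsCoprime (Eseq B (m+1)) B := ih.of_mul_right_left
    have h1 : IsCoprime (Eseq B (m+2)) (Eseq B (m+1)) := by
      have := (hE1.symm.neg_left.add_mul_left_left (B+2))
      rwa [show -Eseq B m + Eseq B (m+1) * (B+2) = Eseq B (m+2) from by rw [Eseq_ss]; ring] at this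
    have h2 : IsCoprime (Eseq B (m+2)) B := by
      have hb : IsCoprime B ((Eseq B (m+1))^2 + B * 1) := (hEB.symm.pow_right).add_mul_left_right 1
      rw [mul_one, ← Eseq_id B m] at hb
      exact hb.of_mul_right_left.symm
    exact h2.mul_right h1

theorem lambda_prime_divides_tail
    (n a : ℕ) (hn : 4 ≤ n) (ha : a ≤ n - 2)
    (y : ℕ → ℕ)
    (hy0 : y 0 = 2)
    (hy : ∀ m, 1 ≤ m → y m = 1 + ∏ i ∈ Finset.range m, y i)
    (k : ℕ → ℕ)
    (hk : Set.BijOn k (Set.Icc 3 n) (Set.Iic (n - 2) \ {a}))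
    (L : ℕ → ℕ → ℚ)
    (hL00 : L 0 0 = 1)
    (hL01 : L 0 1 = 2 * ((y (n - 1) : ℚ) - 1) / (y a : ℚ))
    (hL02 : L 0 2 = 1)
    (hL0i : ∀ i, 3 ≤ i → i ≤ n → L 0 i = 2 * ((y (n - 1) : ℚ) - 1) / (y (k i) : ℚ))
    (hR0 : ∀ m, L (m + 1) 0 = L m 2)
    (hR1 : ∀ m, L (m + 1) 1 = L m 1)
    (hR2 : ∀ m, L (m + 1) 2 = (L m 1 + L m 2) ^ 2 / L m 0)
    (hRi : ∀ m i, 3 ≤ i → i ≤ n → L (m + 1) i = L m i * (L m 1 + L m 2) / L m 0)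
    : ∀ m, 1 ≤ m → ∃ p : ℕ, p.Prime ∧
      ¬ QDvd p (L m 0) ∧ ¬ QDvd p (L m 1) ∧
      ∀ i, 2 ≤ i → i ≤ n → QDvd p (L m i) := by
  -- positivity of y
  have hypos : ∀ i, 1 ≤ y i := by
    intro i
    induction i using Nat.strong_induction_on with
    | _ i ih =>
      match i with
      | 0 => simp [hy0]
      | (j+1) =>
        rw [hy (j+1) (by omega)]
        have : 0 < ∏ i ∈ Finset.range (j+1), y i :=
          Finset.prod_pos (fun i hi => ih i (Finset.mem_range.mp hi))
        omega
  set T : ℕ := ∏ i ∈ Finset.range (n-1), y i with hTdef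
  have hT : y (n-1) = 1 + T := hy (n-1) (by omega)
  have hTpos : 0 < T := Finset.prod_pos (fun i _ => hypos i)
  have hdvd : ∀ j, j ≤ n-2 → y j ∣ T := fun j hj =>
    Finset.dvd_prod_of_mem y (Finset.mem_range.mpr (by omega))
  have hcast : ∀ j, j ≤ n-2 →
      ((2 * ((T / y j : ℕ) : ℤ) : ℤ) : ℚ) = 2 * ((y (n-1) : ℚ) - 1) / (y j : ℚ) := by
    intro j hj
    have hd := hdvd j hj
    have hyne : (y j : ℚ) ≠ 0 := Nat.cast_ne_zero.mpr (by have := hypos j; omega)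
    have hcd : ((T / y j : ℕ) : ℚ) = (T : ℚ) / (y j : ℚ) := Nat.cast_div hd hyne
    rw [hT]
    simp only [Int.cast_mul, Int.cast_ofNat, Int.cast_natCast, hcd]
    push_cast
    field_simp
    ring
  set Bz : ℤ := 2 * ((T / y a : ℕ) : ℤ) with hBzdef
  have hBz2 : 2 ≤ Bz := by
    have h1 : 1 ≤ T / y a := Nat.div_pos (Nat.le_of_dvd hTpos (hdvd a ha)) (hypos a)
    rw [hBzdef]; omega
  have hB0 : (0:ℤ) ≤ Bz := by linarith
  have hEpos : ∀ m, 1 ≤ Eseq Bz m := fun m => (Eseq_mono Bz hB0 m).1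
  have hEne : ∀ m, ((Eseq Bz m : ℤ) : ℚ) ≠ 0 := fun m =>
    Int.cast_ne_zero.mpr (by have := hEpos m; omega)
  -- the main invariant
  have key : ∀ m, (L (m+1) 0 = ((Eseq Bz m : ℤ) : ℚ)^2) ∧ (L (m+1) 1 = ((Bz : ℤ) : ℚ)) ∧
      (L (m+1) 2 = ((Eseq Bz (m+1) : ℤ) : ℚ)^2) ∧
      (∀ i, 3 ≤ i → i ≤ n → L (m+1) i =
        ((2 * ((T / y (k i) : ℕ) : ℤ) : ℤ) : ℚ) * ((Eseq Bz (m+1) : ℤ) : ℚ) * ((Eseq Bz m : ℤ) : ℚ)) := by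
    intro m
    induction m with
    | zero =>
      have hB01 : L 0 1 = ((Bz : ℤ) : ℚ) := by
        rw [hL01, hBzdef, ← hcast a ha]
      refine ⟨?_, ?_, ?_, ?_⟩
      · rw [hR0, hL02, Eseq_zero]; norm_num
      · rw [hR1, hB01]
      · rw [hR2, hL00, hL02, hB01, Eseq_one, div_one]
        push_cast
        ring
      · intro i h3 h4
        have hki : k i ≤ n - 2 := (hk.mapsTo (Set.mem_Icc.mpr ⟨h3, h4⟩)).1
        rw [hRi 0 i h3 h4, hL0i i h3 h4, hL00, hL02, hB01, ← hcast (k i) hki, Eseq_one, Eseq_zero, div_one]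
        push_cast
        ring
    | succ m ih =>
      obtain ⟨ih0, ih1, ih2, ihi⟩ := ih
      have hid : ((Eseq Bz (m+2) : ℤ) : ℚ) * ((Eseq Bz m : ℤ) : ℚ)
          = ((Eseq Bz (m+1) : ℤ) : ℚ)^2 + ((Bz : ℤ) : ℚ) := by
        exact_mod_cast congrArg (fun z : ℤ => (z : ℚ)) (Eseq_id Bz m)
      refine ⟨?_, ?_, ?_, ?_⟩
      · rw [hR0, ih2]
      · rw [hR1, ih1]
      · rw [hR2, ih0, ih1, ih2, div_eq_iff (pow_ne_zero 2 (hEne m))]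
        linear_combination (-(((Bz : ℤ) : ℚ) + ((Eseq Bz (m+1) : ℤ) : ℚ)^2
          + ((Eseq Bz (m+2) : ℤ) : ℚ) * ((Eseq Bz m : ℤ) : ℚ))) * hid
      · intro i h3 h4
        rw [hRi (m+1) i h3 h4, ihi i h3 h4, ih0, ih1, ih2,
          div_eq_iff (pow_ne_zero 2 (hEne m))]
        linear_combination (-(((2 * ((T / y (k i) : ℕ) : ℤ) : ℤ) : ℚ)
          * ((Eseq Bz (m+1) : ℤ) : ℚ) * ((Eseq Bz m : ℤ) : ℚ))) * hid
  -- conclusion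
  intro m hm
  obtain ⟨m', rfl⟩ : ∃ m', m = m' + 1 := ⟨m - 1, by omega⟩
  obtain ⟨ih0, ih1, ih2, ihi⟩ := key m'
  have hE3 : 3 ≤ Eseq Bz (m'+1) := Eseq_ge3 Bz hBz2 m'
  have hne1 : (Eseq Bz (m'+1)).natAbs ≠ 1 := by omega
  obtain ⟨p, pp, hpd⟩ := Nat.exists_prime_and_dvd hne1
  have hpZ : (p : ℤ) ∣ Eseq Bz (m'+1) :=
    dvd_trans (Int.natCast_dvd_natCast.mpr hpd) (Int.natAbs_dvd.mpr (dvd_refl _))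
  have ppZ : Prime (p : ℤ) := Nat.prime_iff_prime_int.mp pp
  have hcop := Eseq_coprime Bz m'
  have notdvd : ¬ (p : ℤ) ∣ (Bz * Eseq Bz m') := fun h =>
    ppZ.not_unit (hcop.isUnit_of_dvd' hpZ h)
  refine ⟨p, pp, ?_, ?_, ?_⟩
  · rintro ⟨c, hc⟩
    rw [ih0] at hc
    have hc' : (Eseq Bz m')^2 = (p : ℤ) * c := by exact_mod_cast hc
    have : (p : ℤ) ∣ Eseq Bz m' := ppZ.dvd_of_dvd_pow (hc' ▸ Dvd.intro c rfl)
    exact notdvd (this.mul_left Bz)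
  · rintro ⟨c, hc⟩
    rw [ih1] at hc
    have hc' : Bz = (p : ℤ) * c := by exact_mod_cast hc
    have : (p : ℤ) ∣ Bz := ⟨c, hc'⟩
    exact notdvd (this.mul_right _)
  · intro i h2 h4
    obtain ⟨c0, hc0⟩ := hpZ
    rcases Nat.lt_or_ge i 3 with hi | hi
    · have : i = 2 := by omega
      subst this
      refine ⟨p * c0^2, ?_⟩
      rw [ih2, hc0]
      push_cast
      ring
    · refine ⟨2 * ((T / y (k i) : ℕ) : ℤ) * c0 * Eseq Bz m', ?_⟩
      rw [ihi i hi h4, hc0]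
      push_cast
      ring
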